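/- Holographic limit of the two-point function: fix d > 0 and distinct x₁, x₂ ∈ (0,1), and define φ_λ(x₁,x₂) := [(D₂(λ))'(x₁)(D₂(λ))'(x₂)]^d · |D₂(λ)x₁ - D₂(λ)x₂|^{-2d}. Then lim_{λ→∞} φ_λ(x₁,x₂) = [ξ'(x₁)ξ'(x₂)]^d · |ξ(x₁) - ξ(x₂)|^{-2d}. -/

import Mathlib

/-- The stretching map ξ(x) = 2x/(1-x²). -/
noncomputable def xi (x : ℝ) : ℝ := 2 * x / (1 - x ^ 2)

/-- The inverse map ξ⁻¹(y) = (√(y²+1)-1)/y. -/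
noncomputable def xiInv (y : ℝ) : ℝ := (Real.sqrt (y ^ 2 + 1) - 1) / y

/-- The lifted dilation D₂(λ) = ξ⁻¹ ∘ D(λ) ∘ ξ on (0,1). -/
noncomputable def D2 (l x : ℝ) : ℝ := xiInv (l * xi x)

noncomputable def xi' (x : ℝ) : ℝ := 2 * (1 + x ^ 2) / (1 - x ^ 2) ^ 2

open Filter Real

/-- Auxiliary: S a l = √((l a)² + 1). -/
noncomputable def S (a l : ℝ) : ℝ := Real.sqrt ((l * a) ^ 2 + 1)

/-- Auxiliary: rescaled product of derivatives l² (D₂(λ))'(x₁)(D₂(λ))'(x₂). -/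
noncomputable def Pfun (a₁ a₂ b₁ b₂ l : ℝ) : ℝ :=
  b₁ * b₂ / (a₁ ^ 2 * a₂ ^ 2) * ((S a₁ l - 1) / S a₁ l) * ((S a₂ l - 1) / S a₂ l)

/-- Auxiliary: rescaled difference l (D₂(λ)x₁ - D₂(λ)x₂). -/
noncomputable def Nfun (a₁ a₂ l : ℝ) : ℝ :=
  ((a₂ ^ 2 - a₁ ^ 2) / (a₂ * S a₁ l + a₁ * S a₂ l) + (a₁ - a₂)) / (a₁ * a₂)

lemma S_pos (a l : ℝ) : 0 < S a l := by
  apply Real.sqrt_pos.2; positivity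

lemma S_sq (a l : ℝ) : (S a l) ^ 2 = (l * a) ^ 2 + 1 := by
  apply Real.sq_sqrt; positivity

lemma S_gt_one {a l : ℝ} (ha : 0 < a) (hl : 0 < l) : 1 < S a l := by
  have h1 := S_pos a l
  have h2 := S_sq a l
  nlinarith [mul_pos hl ha]

lemma S_tendsto {a : ℝ} (ha : 0 < a) : Tendsto (S a) atTop atTop := by
  apply tendsto_atTop_mono (f := fun l : ℝ => l * a)
  · intro l
    calc l * a ≤ |l * a| := le_abs_self _
    _ = Real.sqrt ((l * a) ^ 2) := (Real.sqrt_sq_eq_abs _).symm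
    _ ≤ S a l := Real.sqrt_le_sqrt (by nlinarith)
  · exact Tendsto.atTop_mul_const ha tendsto_id

lemma sub_one_div_tendsto {a : ℝ} (ha : 0 < a) :
    Tendsto (fun l => (S a l - 1) / S a l) atTop (nhds 1) := by
  have h : ∀ l : ℝ, (S a l - 1) / S a l = 1 - (S a l)⁻¹ := by
    intro l
    field_simp [(S_pos a l).ne']
  simp only [h]
  have := (tendsto_inv_atTop_zero.comp (S_tendsto ha)).const_sub 1
  simpa using this

lemma xi_pos {x : ℝ} (hx : x ∈ Set.Ioo (0:ℝ) 1) : 0 < xi x := by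
  obtain ⟨h0, h1⟩ := hx
  have : 0 < 1 - x ^ 2 := by nlinarith
  unfold xi; positivity

lemma xi'_pos {x : ℝ} (hx : x ∈ Set.Ioo (0:ℝ) 1) : 0 < xi' x := by
  obtain ⟨h0, h1⟩ := hx
  have : 0 < 1 - x ^ 2 := by nlinarith
  unfold xi'; positivity

lemma hasDerivAt_xi {x : ℝ} (hx : x ∈ Set.Ioo (0:ℝ) 1) : HasDerivAt xi (xi' x) x := by
  obtain ⟨h0, h1⟩ := hx
  have hden : (1 : ℝ) - x ^ 2 ≠ 0 := by nlinarith
  have hnum : HasDerivAt (fun x : ℝ => 2 * x) 2 x := by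
    simpa using (hasDerivAt_id x).const_mul 2
  have hd : HasDerivAt (fun x : ℝ => 1 - x ^ 2) (-(2 * x)) x := by
    have := ((hasDerivAt_pow 2 x).const_sub 1)
    simpa using this
  have := hnum.div hd hden
  refine HasDerivAt.congr_deriv this ?_
  unfold xi'
  field_simp
  ring

lemma hasDerivAt_xiInv {u : ℝ} (hu : 0 < u) :
    HasDerivAt xiInv ((S 1 u - 1) / (u ^ 2 * S 1 u)) u := by
  have hsq : u ^ 2 + 1 ≠ 0 := by positivity
  have hs : Real.sqrt (u ^ 2 + 1) = S 1 u := by unfold S; norm_num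
  have h1 : HasDerivAt (fun y : ℝ => y ^ 2 + 1) (2 * u) u := by
    simpa using (hasDerivAt_pow 2 u).add_const 1
  have h2 : HasDerivAt (fun y : ℝ => Real.sqrt (y ^ 2 + 1))
      (1 / (2 * Real.sqrt (u ^ 2 + 1)) * (2 * u)) u :=
    (Real.hasDerivAt_sqrt hsq).comp u h1
  have h3 : HasDerivAt (fun y : ℝ => Real.sqrt (y ^ 2 + 1) - 1)
      (1 / (2 * Real.sqrt (u ^ 2 + 1)) * (2 * u)) u := h2.sub_const 1
  have h4 := h3.div (hasDerivAt_id u) hu.ne'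
  have hS : 0 < S 1 u := S_pos 1 u
  have hSsq : (S 1 u) ^ 2 = u ^ 2 + 1 := by
    rw [← hs]; exact Real.sq_sqrt (by positivity)
  have heq : (1 / (2 * Real.sqrt (u ^ 2 + 1)) * (2 * u) * u -
      (Real.sqrt (u ^ 2 + 1) - 1) * 1) / u ^ 2 = (S 1 u - 1) / (u ^ 2 * S 1 u) := by
    rw [hs]
    field_simp
    linear_combination (-1 : ℝ) * hSsq
  rw [← heq]
  exact h4

lemma hasDerivAt_D2 {l x : ℝ} (hl : 0 < l) (hx : x ∈ Set.Ioo (0:ℝ) 1) :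
    HasDerivAt (D2 l)
      (l * xi' x * (S (xi x) l - 1) / ((l * xi x) ^ 2 * S (xi x) l)) x := by
  have ha := xi_pos hx
  have hu : 0 < l * xi x := mul_pos hl ha
  have h1 : HasDerivAt (fun x : ℝ => l * xi x) (l * xi' x) x :=
    (hasDerivAt_xi hx).const_mul l
  have h2 := (hasDerivAt_xiInv hu).comp x h1
  have hS1 : S 1 (l * xi x) = S (xi x) l := by unfold S; ring_nf
  have heq : (S 1 (l * xi x) - 1) / ((l * xi x) ^ 2 * S 1 (l * xi x)) * (l * xi' x)
      = l * xi' x * (S (xi x) l - 1) / ((l * xi x) ^ 2 * S (xi x) l) := by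
    rw [hS1]; ring
  rw [heq] at h2
  exact h2

lemma D2_eq (l x : ℝ) : D2 l x = (S (xi x) l - 1) / (l * xi x) := by
  unfold D2 xiInv S
  norm_num

set_option maxHeartbeats 1000000 in
/-- Holographic limit of the two-point function:
    φ_λ(x₁,x₂) = [(D₂(λ))'(x₁)(D₂(λ))'(x₂)]^d |D₂(λ)x₁ - D₂(λ)x₂|^{-2d}
    converges to [ξ'(x₁)ξ'(x₂)]^d |ξ(x₁) - ξ(x₂)|^{-2d} as λ → ∞. -/
theorem holographic_limit_two_point (d x₁ x₂ : ℝ) (hd : 0 < d)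
    (hx₁ : x₁ ∈ Set.Ioo (0 : ℝ) 1) (hx₂ : x₂ ∈ Set.Ioo (0 : ℝ) 1)
    (hne : x₁ ≠ x₂) :
    Filter.Tendsto
      (fun l => (deriv (D2 l) x₁ * deriv (D2 l) x₂) ^ d *
        (((D2 l x₁ - D2 l x₂) ^ 2) ^ (-d) : ℝ))
      Filter.atTop
      (nhds ((xi' x₁ * xi' x₂) ^ d * (((xi x₁ - xi x₂) ^ 2) ^ (-d) : ℝ))) := by
  have ha₁ : 0 < xi x₁ := xi_pos hx₁
  have ha₂ : 0 < xi x₂ := xi_pos hx₂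
  have hb₁ : 0 < xi' x₁ := xi'_pos hx₁
  have hb₂ : 0 < xi' x₂ := xi'_pos hx₂
  generalize hA1 : xi x₁ = a₁ at *
  generalize hA2 : xi x₂ = a₂ at *
  generalize hB1 : xi' x₁ = b₁ at *
  generalize hB2 : xi' x₂ = b₂ at *
  have hane : a₁ ≠ a₂ := by
    intro h
    apply hne
    have h1 := hx₁.1; have h2 := hx₁.2; have h3 := hx₂.1; have h4 := hx₂.2
    have d1 : (1:ℝ) - x₁ ^ 2 ≠ 0 := by nlinarith
    have d2 : (1:ℝ) - x₂ ^ 2 ≠ 0 := by nlinarith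
    rw [← hA1, ← hA2] at h
    unfold xi at h
    field_simp at h
    nlinarith [mul_pos h1 h3]
  have hsub : a₁ - a₂ ≠ 0 := sub_ne_zero.2 hane
  have hPlim : Tendsto (Pfun a₁ a₂ b₁ b₂) atTop (nhds (b₁ * b₂ / (a₁ ^ 2 * a₂ ^ 2))) := by
    unfold Pfun
    have := ((sub_one_div_tendsto ha₁).const_mul (b₁ * b₂ / (a₁ ^ 2 * a₂ ^ 2))).mul
      (sub_one_div_tendsto ha₂)
    simpa using this
  have hdenomTendsto : Tendsto (fun l => a₂ * S a₁ l + a₁ * S a₂ l) atTop atTop := by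
    have h1 : Tendsto (fun l => a₂ * S a₁ l) atTop atTop :=
      (S_tendsto ha₁).const_mul_atTop ha₂
    have h2 : ∀ l : ℝ, 0 ≤ a₁ * S a₂ l := fun l => le_of_lt (mul_pos ha₁ (S_pos a₂ l))
    exact Filter.Tendsto.atTop_add_nonneg h1 h2
  have hNlim : Tendsto (Nfun a₁ a₂) atTop (nhds ((a₁ - a₂) / (a₁ * a₂))) := by
    unfold Nfun
    have h0 : Tendsto (fun l => (a₂ ^ 2 - a₁ ^ 2) / (a₂ * S a₁ l + a₁ * S a₂ l))
        atTop (nhds 0) := by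
      simp only [div_eq_mul_inv]
      have := (tendsto_inv_atTop_zero.comp hdenomTendsto).const_mul (a₂ ^ 2 - a₁ ^ 2)
      simpa using this
    have := (h0.add_const (a₁ - a₂)).div_const (a₁ * a₂)
    simpa using this
  have hL : b₁ * b₂ / (a₁ ^ 2 * a₂ ^ 2) / ((a₁ - a₂) / (a₁ * a₂)) ^ 2
      = b₁ * b₂ / (a₁ - a₂) ^ 2 := by
    field_simp
  have hQlim : Tendsto (fun l => Pfun a₁ a₂ b₁ b₂ l / (Nfun a₁ a₂ l) ^ 2) atTop
      (nhds (b₁ * b₂ / (a₁ - a₂) ^ 2)) := by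
    rw [← hL]
    exact hPlim.div (hNlim.pow 2) (by positivity)
  have hQd : Tendsto (fun l => (Pfun a₁ a₂ b₁ b₂ l / (Nfun a₁ a₂ l) ^ 2) ^ d) atTop
      (nhds ((b₁ * b₂ / (a₁ - a₂) ^ 2) ^ d)) :=
    hQlim.rpow_const (Or.inr hd.le)
  have htarget : (b₁ * b₂ / (a₁ - a₂) ^ 2) ^ d
      = (b₁ * b₂) ^ d * (((a₁ - a₂) ^ 2) ^ (-d) : ℝ) := by
    have h1 : (0:ℝ) < (a₁ - a₂) ^ 2 := by positivity
    rw [Real.div_rpow (by positivity) h1.le, Real.rpow_neg h1.le, div_eq_mul_inv]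
  apply Tendsto.congr' _ (htarget ▸ hQd)
  filter_upwards [eventually_gt_atTop (0:ℝ)] with l hl
  have hs₁ := S_pos a₁ l
  have hs₂ := S_pos a₂ l
  have hs₁1 := S_gt_one ha₁ hl
  have hs₂1 := S_gt_one ha₂ hl
  have hsq₁ := S_sq a₁ l
  have hsq₂ := S_sq a₂ l
  have hd₁ : deriv (D2 l) x₁ = l * b₁ * (S a₁ l - 1) / ((l * a₁) ^ 2 * S a₁ l) := by
    have := (hasDerivAt_D2 hl hx₁).deriv
    rw [hA1, hB1] at this
    exact this
  have hd₂ : deriv (D2 l) x₂ = l * b₂ * (S a₂ l - 1) / ((l * a₂) ^ 2 * S a₂ l) := by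
    have := (hasDerivAt_D2 hl hx₂).deriv
    rw [hA2, hB2] at this
    exact this
  have he₁ : D2 l x₁ = (S a₁ l - 1) / (l * a₁) := by rw [D2_eq, hA1]
  have he₂ : D2 l x₂ = (S a₂ l - 1) / (l * a₂) := by rw [D2_eq, hA2]
  have hdenpos : 0 < a₂ * S a₁ l + a₁ * S a₂ l := by positivity
  have key : (a₂ ^ 2 - a₁ ^ 2) / (a₂ * S a₁ l + a₁ * S a₂ l)
      = a₂ * S a₁ l - a₁ * S a₂ l := by
    rw [div_eq_iff hdenpos.ne']
    nlinarith [hsq₁, hsq₂]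
  have hF : deriv (D2 l) x₁ * deriv (D2 l) x₂ = Pfun a₁ a₂ b₁ b₂ l / l ^ 2 := by
    rw [hd₁, hd₂]
    unfold Pfun
    field_simp
  have hG : D2 l x₁ - D2 l x₂ = Nfun a₁ a₂ l / l := by
    rw [he₁, he₂]
    unfold Nfun
    rw [key]
    field_simp
    ring
  have hPpos : 0 < Pfun a₁ a₂ b₁ b₂ l := by
    unfold Pfun
    have h1 : 0 < S a₁ l - 1 := by linarith
    have h2 : 0 < S a₂ l - 1 := by linarith
    positivity
  have hNne : Nfun a₁ a₂ l ≠ 0 := by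
    unfold Nfun
    rw [key]
    have hgt : a₁ + a₂ < a₂ * S a₁ l + a₁ * S a₂ l := by nlinarith
    have hfac : a₂ * S a₁ l - a₁ * S a₂ l + (a₁ - a₂)
        = (a₁ - a₂) * ((a₂ * S a₁ l + a₁ * S a₂ l) - (a₁ + a₂))
          / (a₂ * S a₁ l + a₁ * S a₂ l) := by
      rw [eq_div_iff hdenpos.ne']
      nlinarith [key, hsq₁, hsq₂]
    rw [hfac]
    apply div_ne_zero
    · apply div_ne_zero
      exact mul_ne_zero hsub (by linarith)
      exact hdenpos.ne'
    · exact (mul_pos ha₁ ha₂).ne'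
  rw [hF, hG]
  have hl2 : (0:ℝ) < l ^ 2 := by positivity
  have hN2 : (0:ℝ) < (Nfun a₁ a₂ l) ^ 2 := by positivity
  rw [div_pow, Real.div_rpow hPpos.le hl2.le,
    Real.rpow_neg (by positivity : (0:ℝ) ≤ (Nfun a₁ a₂ l) ^ 2 / l ^ 2),
    Real.div_rpow hN2.le hl2.le,
    Real.div_rpow hPpos.le hN2.le]
  have hl2d : (0:ℝ) < (l ^ 2 : ℝ) ^ d := Real.rpow_pos_of_pos hl2 d
  have hN2d : (0:ℝ) < ((Nfun a₁ a₂ l) ^ 2 : ℝ) ^ d := Real.rpow_pos_of_pos hN2 d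
  field_simp
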